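/- Let V_t be the value-iteration iterates (V_0 ≡ 0, V_{t+1}(S) = c(S) + min{(K_0 V_t)(S), (K_1 V_t)(S)}). Then for every t ≥ 0, every source state X ∈ {0,1}, every VIA value Δ ∈ {0,...,Δ_max}, and every battery level e ∈ {0,...,E_max−1}, one has V_t(e+1, X, Δ) ≤ V_t(e, X, Δ); that is, a higher battery level never increases the value-iteration cost-to-go. -/

import Mathlib

open Finset

namespace VIA

/-- The MDP state space: battery level, source state, VIA value. -/
abbrev State (Emax Dmax : ℕ) := Fin (Emax + 1) × Bool × Fin (Dmax + 1)

/-- Deterministic next state given the action `a`, energy arrival `b`,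
source-flip indicator `f`, and channel-success indicator `h`. -/
def nextState (Emax Dmax : ℕ) (s : State Emax Dmax) (a b f h : Bool) :
    State Emax Dmax :=
  let act : Bool := a && decide (0 < s.1.val)
  -- a successful transmission requires transmitting and channel success
  let succ : Bool := act && h
  (⟨min (s.1.val + (if b then 1 else 0) - (if act then 1 else 0)) Emax,
      Nat.lt_succ_of_le (min_le_right _ _)⟩,
   (if f then !s.2.1 else s.2.1),
   ⟨min (if succ then (if f then 1 else 0)
         else (if f then s.2.2.val + 1 else s.2.2.val)) Dmax,
      Nat.lt_succ_of_le (min_le_right _ _)⟩)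

/-- Bernoulli weight: probability `x` for `true`, `1 - x` for `false`. -/
def bern (x : ℝ) : Bool → ℝ := fun b => if b then x else 1 - x

/-- The transition kernel `K_a(s, s')` of the MDP, for action `a`
(`a = true` means transmit).  The source flips with probability `p`
from state `0 = false` and with probability `q` from state `1 = true`;
energy arrives with probability `β`; a transmission succeeds with
probability `ps`. -/
def K (Emax Dmax : ℕ) (p q β ps : ℝ) (a : Bool) (s s' : State Emax Dmax) : ℝ :=
  ∑ b : Bool, ∑ f : Bool, ∑ h : Bool,
    bern β b * bern (if s.2.1 then q else p) f * bern ps h *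
      (if nextState Emax Dmax s a b f h = s' then 1 else 0)

/-- The per-stage cost: the VIA value. -/
def cost (Emax Dmax : ℕ) (s : State Emax Dmax) : ℝ := s.2.2.val

/-- `(K_a V)(s) = ∑_{s'} K_a(s,s') V(s')`. -/
def KV (Emax Dmax : ℕ) (p q β ps : ℝ) (a : Bool) (V : State Emax Dmax → ℝ)
    (s : State Emax Dmax) : ℝ :=
  ∑ s' : State Emax Dmax, K Emax Dmax p q β ps a s s' * V s'

/-- Value iteration: `V_0 ≡ 0`,
`V_{t+1}(s) = c(s) + min{(K_0 V_t)(s), (K_1 V_t)(s)}`. -/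
def Viter (Emax Dmax : ℕ) (p q β ps : ℝ) : ℕ → State Emax Dmax → ℝ
  | 0 => fun _ => 0
  | t + 1 => fun s =>
      cost Emax Dmax s +
        min (KV Emax Dmax p q β ps false (Viter Emax Dmax p q β ps t) s)
            (KV Emax Dmax p q β ps true (Viter Emax Dmax p q β ps t) s)

/-- `ΔV_t(s) = (K_1 V_t)(s) − (K_0 V_t)(s)`. -/
def dV (Emax Dmax : ℕ) (p q β ps : ℝ) (t : ℕ) (s : State Emax Dmax) : ℝ :=
  KV Emax Dmax p q β ps true (Viter Emax Dmax p q β ps t) s -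
    KV Emax Dmax p q β ps false (Viter Emax Dmax p q β ps t) s



lemma bern_nonneg {x : ℝ} (h0 : 0 ≤ x) (h1 : x ≤ 1) (b : Bool) : 0 ≤ bern x b := by
  cases b <;> simp [bern] <;> linarith

lemma KV_eq (Emax Dmax : ℕ) (p q β ps : ℝ) (a : Bool) (V : State Emax Dmax → ℝ)
    (s : State Emax Dmax) :
    KV Emax Dmax p q β ps a V s =
      ∑ b : Bool, ∑ f : Bool, ∑ h : Bool,
        bern β b * bern (if s.2.1 then q else p) f * bern ps h *
          V (nextState Emax Dmax s a b f h) := by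
  unfold KV K
  simp only [Finset.sum_mul]
  rw [Finset.sum_comm]
  refine Finset.sum_congr rfl fun b _ => ?_
  rw [Finset.sum_comm]
  refine Finset.sum_congr rfl fun f _ => ?_
  rw [Finset.sum_comm]
  refine Finset.sum_congr rfl fun h _ => ?_
  simp [mul_assoc, ite_mul, ← Finset.mul_sum, Finset.sum_ite_eq]

lemma KV_le_KV {Emax Dmax : ℕ} {p q β ps : ℝ}
    (hp0 : 0 ≤ p) (hp1 : p ≤ 1) (hq0 : 0 ≤ q) (hq1 : q ≤ 1)
    (hβ0 : 0 ≤ β) (hβ1 : β ≤ 1) (hps0 : 0 ≤ ps) (hps1 : ps ≤ 1)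
    {V : State Emax Dmax → ℝ} {a a' : Bool} {s1 s2 : State Emax Dmax}
    (hX : s1.2.1 = s2.2.1)
    (hpt : ∀ b f h, V (nextState Emax Dmax s1 a b f h) ≤
        V (nextState Emax Dmax s2 a' b f h)) :
    KV Emax Dmax p q β ps a V s1 ≤ KV Emax Dmax p q β ps a' V s2 := by
  rw [KV_eq, KV_eq, hX]
  refine Finset.sum_le_sum fun b _ => Finset.sum_le_sum fun f _ =>
    Finset.sum_le_sum fun h _ => ?_
  refine mul_le_mul_of_nonneg_left (hpt b f h) ?_
  have h2 : 0 ≤ (if s2.2.1 then q else p) := by split <;> assumption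
  have h3 : (if s2.2.1 then q else p) ≤ 1 := by split <;> assumption
  exact mul_nonneg (mul_nonneg (bern_nonneg hβ0 hβ1 b) (bern_nonneg h2 h3 f))
    (bern_nonneg hps0 hps1 h)

lemma mono_of_step {Emax Dmax : ℕ} (V : State Emax Dmax → ℝ)
    (hstep : ∀ (X : Bool) (d : ℕ) (hd : d ≤ Dmax) (e : ℕ) (he : e + 1 ≤ Emax),
      V (⟨e + 1, Nat.lt_succ_of_le he⟩, X, ⟨d, Nat.lt_succ_of_le hd⟩) ≤ V (⟨e, Nat.lt_succ_of_le (Nat.le_of_succ_le he)⟩, X, ⟨d, Nat.lt_succ_of_le hd⟩)) :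
    ∀ (e1 : ℕ), ∀ (e2 : ℕ) (h1 : e1 ≤ Emax) (h2 : e2 ≤ e1) (X : Bool)
      (D : Fin (Dmax + 1)),
      V (⟨e1, Nat.lt_succ_of_le h1⟩, X, D) ≤ V (⟨e2, Nat.lt_succ_of_le (h2.trans h1)⟩, X, D) := by
  intro e1
  induction e1 with
  | zero =>
    intro e2 h1 h2 X D
    have : e2 = 0 := by omega
    subst this; exact le_rfl
  | succ n ih =>
    intro e2 h1 h2 X D
    rcases Nat.lt_or_ge e2 (n + 1) with hlt | hge
    · have step := hstep X D.val (by omega) n h1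
      exact step.trans (ih e2 (by omega) (by omega) X D)
    · have : e2 = n + 1 := by omega
      subst this; exact le_rfl

/-- **Monotonicity in the battery level.**  For every value-iteration step
`t`, source state `X`, VIA value `Δ ≤ Δ_max`, and battery level
`e ∈ {0,…,E_max−1}`, one has `V_t(e+1,X,Δ) ≤ V_t(e,X,Δ)`: a higher battery
level never increases the value-iteration cost-to-go. -/
theorem value_iteration_antitone_in_battery (Emax Dmax : ℕ)
    (p q β ps : ℝ) (hp0 : 0 ≤ p) (hp1 : p ≤ 1) (hq0 : 0 ≤ q) (hq1 : q ≤ 1)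
    (hβ0 : 0 ≤ β) (hβ1 : β ≤ 1) (hps0 : 0 ≤ ps) (hps1 : ps ≤ 1)
    (t : ℕ) (X : Bool) (d : ℕ) (hd : d ≤ Dmax) (e : ℕ) (he : e + 1 ≤ Emax) :
    Viter Emax Dmax p q β ps t (⟨e + 1, by omega⟩, X, ⟨d, by omega⟩) ≤
      Viter Emax Dmax p q β ps t (⟨e, by omega⟩, X, ⟨d, by omega⟩) := by
  induction t generalizing X d hd e he with
  | zero => simp [Viter]
  | succ t ih =>
    set V := Viter Emax Dmax p q β ps t with hV
    have hmono := mono_of_step V (fun X d hd e he => ih X d hd e he)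
    have hptF : ∀ b f h,
        V (nextState Emax Dmax (⟨e + 1, by omega⟩, X, ⟨d, by omega⟩) false b f h) ≤
        V (nextState Emax Dmax (⟨e, by omega⟩, X, ⟨d, by omega⟩) false b f h) := by
      intro b f h
      rcases b <;> simp [nextState] <;>
        exact hmono _ _ (min_le_right _ _) (by omega) _ _
    show cost Emax Dmax _ +
        min (KV Emax Dmax p q β ps false V _) (KV Emax Dmax p q β ps true V _) ≤
      cost Emax Dmax _ +
        min (KV Emax Dmax p q β ps false V _) (KV Emax Dmax p q β ps true V _)
    have hc : cost Emax Dmax ((⟨e + 1, by omega⟩, X, ⟨d, by omega⟩) : State Emax Dmax)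
        = cost Emax Dmax ((⟨e, by omega⟩, X, ⟨d, by omega⟩) : State Emax Dmax) := rfl
    rw [hc]
    refine add_le_add (le_refl _) ?_
    have hF := KV_le_KV hp0 hp1 hq0 hq1 hβ0 hβ1 hps0 hps1 (a := false) (a' := false)
      (s1 := (⟨e + 1, by omega⟩, X, ⟨d, by omega⟩))
      (s2 := (⟨e, by omega⟩, X, ⟨d, by omega⟩)) rfl hptF (V := V)
      (p := p) (q := q) (β := β) (ps := ps)
    by_cases he0 : e = 0
    · subst he0
      have hK : KV Emax Dmax p q β ps true V ((⟨0, by omega⟩, X, ⟨d, by omega⟩) : State Emax Dmax)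
          = KV Emax Dmax p q β ps false V ((⟨0, by omega⟩, X, ⟨d, by omega⟩) : State Emax Dmax) := by
        rw [KV_eq, KV_eq]
        refine Finset.sum_congr rfl fun b _ => Finset.sum_congr rfl fun f _ =>
          Finset.sum_congr rfl fun h _ => ?_
        rfl
      rw [hK, min_self]
      exact (min_le_left _ _).trans hF
    · have hed : 0 < e := Nat.pos_of_ne_zero he0
      have hptT : ∀ b f h,
          V (nextState Emax Dmax (⟨e + 1, by omega⟩, X, ⟨d, by omega⟩) true b f h) ≤
          V (nextState Emax Dmax (⟨e, by omega⟩, X, ⟨d, by omega⟩) true b f h) := by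
        intro b f h
        rcases b <;> simp [nextState, hed] <;>
          exact hmono _ _ (min_le_right _ _) (by omega) _ _
      have hT := KV_le_KV hp0 hp1 hq0 hq1 hβ0 hβ1 hps0 hps1 (a := true) (a' := true)
        (s1 := (⟨e + 1, by omega⟩, X, ⟨d, by omega⟩))
        (s2 := (⟨e, by omega⟩, X, ⟨d, by omega⟩)) rfl hptT (V := V)
        (p := p) (q := q) (β := β) (ps := ps)
      exact min_le_min hF hT


end VIA
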